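/- In the parallel coupon collector problem with N ≥ 2 coupon types and C ≥ 1 collectors, the cover time satisfies E[T(N, C)] ≥ max(N·H_N, log(C)/6), where H_N = Σ_{i=1}^N 1/i. -/

import Mathlib

open MeasureTheory ProbabilityTheory
open scoped ENNReal

/-- The cover time of the parallel coupon collector problem: the first round
`t` by which each of the `C` collectors has collected each of the `N` coupon
types (`ω s c` is the coupon type picked by collector `c` in round `s`). -/
noncomputable def coverTime {N C : ℕ} (ω : ℕ → Fin C → Fin N) : ℕ :=
  sInf {t | ∀ c : Fin C, ∀ x : Fin N, ∃ s < t, ω s c = x}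

/-- `μ` is the law of the picks in the parallel coupon collector problem with
`N` coupon types and `C` collectors: the picks of different rounds are
independent, and in each round the joint pick of the `C` collectors is uniform
among all `N ^ C` possibilities (equivalently, each collector independently
picks a coupon type uniformly at random). -/
def IsCouponMeasure {N C : ℕ} (μ : MeasureTheory.Measure (ℕ → Fin C → Fin N)) : Prop :=
  MeasureTheory.IsProbabilityMeasure μ ∧
    ProbabilityTheory.iIndepFun (fun t (ω : ℕ → Fin C → Fin N) => ω t) μ ∧
    ∀ t : ℕ, ∀ f : Fin C → Fin N, μ {ω | ω t = f} = ((N : ENNReal) ^ C)⁻¹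

/-- The `n`-th harmonic number `H_n = ∑_{i=1}^n 1/i`, as a real number. -/
noncomputable def harmonicR (n : ℕ) : ℝ := ∑ i ∈ Finset.range n, (1 : ℝ) / (i + 1)

namespace CouponCollectorAux

open Finset

/-! ### Combinatorial layer -/

noncomputable def surjCount (t n : ℕ) : ℕ :=
  #(univ.filter fun h : Fin t → Fin n => Function.Surjective h)

lemma card_filter_mem (n t : ℕ) (B : Finset (Fin n)) :
    #(univ.filter fun h : Fin t → Fin n => ∀ s, h s ∈ B) = #B ^ t := by
  rw [← Fintype.card_subtype,
    Fintype.card_congr (Equiv.subtypePiEquivPi (p := fun _ x => x ∈ B))]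
  simp [Fintype.card_pi]

lemma surjCount_le (t n : ℕ) : surjCount t n ≤ n ^ t := by
  calc surjCount t n ≤ #(univ : Finset (Fin t → Fin n)) := card_filter_le _ _
  _ = n ^ t := by simp [card_univ]

lemma surjCount_eq (t n : ℕ) :
    (surjCount t n : ℤ) =
      ∑ k ∈ range (n + 1), (-1) ^ k * (n.choose k) * ((n - k : ℕ) : ℤ) ^ t := by
  classical
  have key := Finset.inclusion_exclusion_card_inf_compl (univ : Finset (Fin n))
    (fun x => univ.filter fun h : Fin t → Fin n => ∀ s, h s ≠ x)
  have hL : (univ.inf fun x : Fin n =>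
      (univ.filter fun h : Fin t → Fin n => ∀ s, h s ≠ x)ᶜ) =
      univ.filter fun h : Fin t → Fin n => Function.Surjective h := by
    ext h
    simp only [mem_inf, mem_compl, mem_filter, mem_univ, true_and, not_forall, not_not,
      Function.Surjective]
    change _ ↔ h ∈ univ.filter fun h : Fin t → Fin n => Function.Surjective h
    rw [Finset.mem_filter]
    simp [Function.Surjective]
  have hA : ∀ A : Finset (Fin n),
      #(A.inf fun x => univ.filter fun h : Fin t → Fin n => ∀ s, h s ≠ x) = (n - #A) ^ t := by
    intro A
    have : (A.inf fun x => univ.filter fun h : Fin t → Fin n => ∀ s, h s ≠ x)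
        = univ.filter fun h : Fin t → Fin n => ∀ s, h s ∈ Aᶜ := by
      ext h
      simp only [mem_inf, mem_filter, mem_univ, true_and, mem_compl]
      constructor
      · intro hh s hs
        exact hh (h s) hs s rfl
      · intro hh x hx s hsx
        exact hh s (hsx ▸ hx)
    rw [this, card_filter_mem, card_compl, Fintype.card_fin]
  rw [hL] at key
  rw [surjCount, key, Finset.sum_powerset]
  have hcu : #(univ : Finset (Fin n)) = n := by simp [card_univ]
  rw [hcu]
  refine Finset.sum_congr rfl fun k hk => ?_
  have : ∀ A ∈ powersetCard k (univ : Finset (Fin n)),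
      ((-1 : ℤ)) ^ #A * #(A.inf fun x => univ.filter fun h : Fin t → Fin n => ∀ s, h s ≠ x)
      = (-1) ^ k * ((n - k : ℕ) : ℤ) ^ t := by
    intro A hA'
    have hAk : #A = k := (mem_powersetCard.1 hA').2
    rw [hA A, hAk]
    push_cast
    ring
  rw [Finset.sum_congr rfl this, Finset.sum_const, card_powersetCard, hcu]
  ring

/-! ### Harmonic number identity -/

lemma alternating_choose_real (n : ℕ) (hn : n ≠ 0) :
    ∑ i ∈ range (n + 1), (-1 : ℝ) ^ i * (n.choose i) = 0 := by
  have := Int.alternating_sum_range_choose (n := n)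
  rw [if_neg hn] at this
  have := congrArg (fun z : ℤ => (z : ℝ)) this
  push_cast at this
  simpa using this

lemma harmonic_id (n : ℕ) :
    ∑ j ∈ range n, (-1 : ℝ) ^ j * (n.choose (j + 1)) / (j + 1) = harmonicR n := by
  induction n with
  | zero => simp [harmonicR]
  | succ n ih =>
    have pascal : ∀ j : ℕ, ((n + 1).choose (j + 1) : ℝ) = n.choose j + n.choose (j + 1) := by
      intro j
      rw [Nat.choose_succ_succ]
      push_cast
      ring
    have split : ∑ j ∈ range (n + 1), (-1 : ℝ) ^ j * ((n + 1).choose (j + 1)) / (j + 1)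
        = (∑ j ∈ range (n + 1), (-1 : ℝ) ^ j * (n.choose (j + 1)) / (j + 1))
          + ∑ j ∈ range (n + 1), (-1 : ℝ) ^ j * (n.choose j) / (j + 1) := by
      rw [← Finset.sum_add_distrib]
      refine Finset.sum_congr rfl fun j hj => ?_
      rw [pascal j]
      ring
    have first : ∑ j ∈ range (n + 1), (-1 : ℝ) ^ j * (n.choose (j + 1)) / (j + 1)
        = ∑ j ∈ range n, (-1 : ℝ) ^ j * (n.choose (j + 1)) / (j + 1) := by
      rw [Finset.sum_range_succ, Nat.choose_succ_self]
      simp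
    have key : ∀ j : ℕ, ((n.choose j : ℝ)) / (j + 1) = ((n + 1).choose (j + 1) : ℝ) / (n + 1) := by
      intro j
      have h := Nat.add_one_mul_choose_eq n j
      have h' : ((n + 1) * n.choose j : ℝ) = ((n + 1).choose (j + 1)) * (j + 1) := by
        exact_mod_cast congrArg (fun z : ℕ => (z : ℝ)) h
      have hj : ((j : ℝ) + 1) ≠ 0 := by positivity
      have hn1 : ((n : ℝ) + 1) ≠ 0 := by positivity
      field_simp
      linarith [h']
    have second : ∑ j ∈ range (n + 1), (-1 : ℝ) ^ j * (n.choose j) / (j + 1) = 1 / (n + 1) := by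
      have hrw : ∑ j ∈ range (n + 1), (-1 : ℝ) ^ j * (n.choose j) / (j + 1)
          = (∑ j ∈ range (n + 1), (-1 : ℝ) ^ j * ((n + 1).choose (j + 1))) / (n + 1) := by
        rw [Finset.sum_div]
        refine Finset.sum_congr rfl fun j hj => ?_
        rw [mul_div_assoc, key j, mul_div_assoc]
      rw [hrw]
      have halt := alternating_choose_real (n + 1) (Nat.succ_ne_zero n)
      rw [Finset.sum_range_succ'] at halt
      have hmain : ∑ j ∈ range (n + 1), (-1 : ℝ) ^ j * ((n + 1).choose (j + 1)) = 1 := by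
        have h3 : ∑ i ∈ range (n + 1), (-1 : ℝ) ^ (i + 1) * ((n + 1).choose (i + 1)) = -1 := by
          have h2 : ∑ k ∈ range (n + 1), (-1:ℝ) ^ (k + 1) * ((n + 1).choose (k + 1)) + 1 = 0 := by
            simpa using halt
          linarith
        calc ∑ j ∈ range (n + 1), (-1 : ℝ) ^ j * ((n + 1).choose (j + 1))
            = -∑ j ∈ range (n + 1), (-1 : ℝ) ^ (j + 1) * ((n + 1).choose (j + 1)) := by
              rw [← Finset.sum_neg_distrib]
              refine Finset.sum_congr rfl fun j hj => by ring
          _ = 1 := by rw [h3]; ring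
      rw [hmain]
    rw [split, first, second, ih, harmonicR, harmonicR, Finset.sum_range_succ]

/-! ### The function `qq` (probability that a single collector is not covered) -/

noncomputable def qq (n t : ℕ) : ℝ :=
  ∑ j ∈ range n, (-1 : ℝ) ^ j * (n.choose (j + 1)) * (((n - (j + 1) : ℕ) : ℝ) / n) ^ t

lemma qq_eq (n t : ℕ) (hn : 1 ≤ n) :
    qq n t = 1 - (surjCount t n : ℝ) / (n : ℝ) ^ t := by
  have hn0 : (n : ℝ) ≠ 0 := by positivity
  have hsurj : (surjCount t n : ℝ)
      = ∑ k ∈ range (n + 1), (-1 : ℝ) ^ k * (n.choose k) * ((n - k : ℕ) : ℝ) ^ t := by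
    have := surjCount_eq t n
    exact_mod_cast congrArg (fun z : ℤ => (z : ℝ)) this
  have hdiv : (surjCount t n : ℝ) / (n : ℝ) ^ t
      = ∑ k ∈ range (n + 1), (-1 : ℝ) ^ k * (n.choose k) * (((n - k : ℕ) : ℝ) / n) ^ t := by
    rw [hsurj, Finset.sum_div]
    refine Finset.sum_congr rfl fun k hk => ?_
    rw [div_pow]
    ring
  rw [hdiv, Finset.sum_range_succ']
  have h0 : (-1 : ℝ) ^ 0 * (n.choose 0) * (((n - 0 : ℕ) : ℝ) / n) ^ t = 1 := by
    simp [div_self hn0]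
  rw [h0, qq]
  have hAB : (∑ j ∈ range n, (-1 : ℝ) ^ j * (n.choose (j + 1)) * (((n - (j + 1) : ℕ) : ℝ) / n) ^ t)
      + (∑ k ∈ range n, (-1 : ℝ) ^ (k + 1) * (n.choose (k + 1)) * (((n - (k + 1) : ℕ) : ℝ) / n) ^ t)
      = 0 := by
    rw [← Finset.sum_add_distrib]
    exact Finset.sum_eq_zero fun j hj => by ring
  linarith

lemma qq_r_mem (n j : ℕ) (hn : 1 ≤ n) (hj : j < n) :
    0 ≤ ((n - (j + 1) : ℕ) : ℝ) / n ∧ ((n - (j + 1) : ℕ) : ℝ) / n < 1 := by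
  have hn0 : (0 : ℝ) < n := by exact_mod_cast hn
  constructor
  · positivity
  · rw [div_lt_one hn0]
    exact_mod_cast Nat.sub_lt (by omega) (Nat.succ_pos j)

lemma qq_summable (n : ℕ) (hn : 1 ≤ n) : Summable (fun t => qq n t) := by
  apply summable_sum
  intro j hj
  obtain ⟨h0, h1⟩ := qq_r_mem n j hn (mem_range.1 hj)
  exact ((summable_geometric_of_lt_one h0 h1).mul_left _)

lemma qq_tsum (n : ℕ) (hn : 1 ≤ n) : ∑' t, qq n t = n * harmonicR n := by
  simp only [qq]
  rw [Summable.tsum_finsetSum (fun j hj => ((summable_geometric_of_lt_one (qq_r_mem n j hn (mem_range.1 hj)).1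
    (qq_r_mem n j hn (mem_range.1 hj)).2).mul_left _))]
  have : ∀ j ∈ range n, (∑' t, (-1 : ℝ) ^ j * (n.choose (j + 1)) * (((n - (j + 1) : ℕ) : ℝ) / n) ^ t)
      = (n : ℝ) * ((-1 : ℝ) ^ j * (n.choose (j + 1)) / (j + 1)) := by
    intro j hj
    have hj' := mem_range.1 hj
    obtain ⟨h0, h1⟩ := qq_r_mem n j hn hj'
    rw [tsum_mul_left, tsum_geometric_of_lt_one h0 h1]
    have hcast : ((n - (j + 1) : ℕ) : ℝ) = (n : ℝ) - (j + 1) := by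
      rw [Nat.cast_sub hj']
      push_cast; ring
    have hn0 : (n : ℝ) ≠ 0 := by positivity
    have hjj : ((j : ℝ) + 1) ≠ 0 := by positivity
    have hrw : (1 - ((n - (j + 1) : ℕ) : ℝ) / n) = ((j : ℝ) + 1) / n := by
      rw [hcast]
      field_simp
      ring
    rw [hrw, inv_div]
    field_simp
  rw [Finset.sum_congr rfl this, ← Finset.mul_sum, harmonic_id n]

lemma qq_nonneg (n t : ℕ) (hn : 1 ≤ n) : 0 ≤ qq n t := by
  rw [qq_eq n t hn]
  have h1 : (surjCount t n : ℝ) / (n : ℝ) ^ t ≤ 1 := by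
    rw [div_le_one (by positivity)]
    exact_mod_cast surjCount_le t n
  linarith

/-! ### `hitR` (probability a fixed collector got coupon `x0` within `t` rounds) -/

noncomputable def hitR (N t : ℕ) : ℝ := ((N ^ t - (N - 1) ^ t : ℕ) : ℝ) / (N : ℝ) ^ t

lemma hitR_eq {N : ℕ} (hN : 1 ≤ N) (t : ℕ) :
    hitR N t = 1 - (((N - 1 : ℕ) : ℝ) / N) ^ t := by
  have hn0 : (0:ℝ) < (N : ℝ) := by exact_mod_cast hN
  have hle : (N - 1) ^ t ≤ N ^ t := Nat.pow_le_pow_left (by omega) t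
  rw [hitR, Nat.cast_sub hle]
  push_cast
  rw [sub_div, div_self (by positivity), div_pow]

lemma hitR_nonneg (N t : ℕ) : 0 ≤ hitR N t := by unfold hitR; positivity

lemma hitR_le_one {N : ℕ} (hN : 1 ≤ N) (t : ℕ) : hitR N t ≤ 1 := by
  rw [hitR_eq hN t]
  have : (0:ℝ) ≤ (((N - 1 : ℕ) : ℝ) / N) ^ t := by positivity
  linarith

lemma exp_le_r {N : ℕ} (hN : 2 ≤ N) : Real.exp (-(2 / N)) ≤ ((N - 1 : ℕ) : ℝ) / N := by
  have hn : (2:ℝ) ≤ (N : ℝ) := by exact_mod_cast hN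
  have hn0 : (0:ℝ) < (N : ℝ) := by linarith
  have hr : ((N - 1 : ℕ) : ℝ) / N = 1 - 1 / N := by
    rw [Nat.cast_sub (by omega)]
    push_cast
    field_simp
  set u : ℝ := 1 / N with hu
  have hu0 : 0 < u := by positivity
  have hu2 : u ≤ 1 / 2 := by
    rw [hu, div_le_div_iff₀ hn0 (by norm_num)]
    linarith
  have hpos : (0:ℝ) < 1 + 2 * u := by linarith
  have h1 : 1 + 2 * u ≤ Real.exp (2 / N) := by
    have h := Real.add_one_le_exp (2 / N)
    have h2u : (2:ℝ) / N = 2 * u := by rw [hu]; ring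
    linarith [h2u ▸ h]
  have h2 : Real.exp (-(2 / N)) ≤ 1 / (1 + 2 * u) := by
    rw [Real.exp_neg, one_div]
    exact inv_anti₀ hpos h1
  have h3 : 1 / (1 + 2 * u) ≤ 1 - u := by
    rw [div_le_iff₀ hpos]
    nlinarith
  rw [hr]
  calc Real.exp (-(2 / N)) ≤ 1 / (1 + 2 * u) := h2
    _ ≤ 1 - u := h3
    _ = 1 - 1 / N := by rw [hu]

lemma hit_small {N C : ℕ} (hN : 2 ≤ N) (hC : 1 ≤ C) (hlog : 6 ≤ Real.log C) (t : ℕ)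
    (ht : t ≤ ⌊(N : ℝ) * Real.log C / 2⌋₊) : hitR N t ^ C ≤ 1 / 2 := by
  have hn : (2:ℝ) ≤ (N : ℝ) := by exact_mod_cast hN
  have hn0 : (0:ℝ) < (N : ℝ) := by linarith
  have hC0 : (0:ℝ) < (C : ℝ) := by exact_mod_cast hC
  set L := Real.log C with hL
  have hL0 : (0:ℝ) ≤ L := by linarith
  set r : ℝ := ((N - 1 : ℕ) : ℝ) / N with hrdef
  have hr0 : 0 ≤ r := by positivity
  have hr1 : r ≤ 1 := by
    rw [hrdef, div_le_one hn0]
    exact_mod_cast Nat.sub_le N 1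
  set t0 := ⌊(N : ℝ) * L / 2⌋₊ with ht0
  have hfloor : (t0 : ℝ) ≤ (N : ℝ) * L / 2 := Nat.floor_le (by positivity)
  have hexp : Real.exp (-(2 / N)) ^ t0 = Real.exp (t0 * (-(2 / N))) := by
    rw [← Real.exp_nat_mul]
  have h4 : (2 / (N:ℝ)) * t0 ≤ (2 / (N:ℝ)) * ((N:ℝ) * L / 2) :=
    mul_le_mul_of_nonneg_left hfloor (by positivity)
  have h5 : (2 / (N:ℝ)) * ((N:ℝ) * L / 2) = L := by field_simp
  have hmono : -L ≤ (t0 : ℝ) * (-(2 / N)) := by nlinarith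
  have hrt0 : 1 / (C:ℝ) ≤ r ^ t0 := by
    calc (1:ℝ) / C = Real.exp (-L) := by rw [Real.exp_neg, hL, Real.exp_log hC0, one_div]
      _ ≤ Real.exp (t0 * (-(2 / N))) := Real.exp_le_exp.2 hmono
      _ = Real.exp (-(2 / N)) ^ t0 := hexp.symm
      _ ≤ r ^ t0 := pow_le_pow_left₀ (Real.exp_pos _).le (exp_le_r hN) t0
  have hrt : r ^ t0 ≤ r ^ t := pow_le_pow_of_le_one hr0 hr1 ht
  have hhit : hitR N t ≤ 1 - 1 / C := by
    rw [hitR_eq (by omega) t, ← hrdef]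
    linarith
  have h1C : (0:ℝ) ≤ 1 - 1 / C := by
    have : 1 / (C:ℝ) ≤ 1 := by
      rw [div_le_one hC0]
      exact_mod_cast hC
    linarith
  have hp1 : hitR N t ^ C ≤ (1 - 1 / C) ^ C := pow_le_pow_left₀ (hitR_nonneg N t) hhit C
  have hp2 : (1 - 1 / (C:ℝ)) ^ C ≤ Real.exp (-(1 / C)) ^ C :=
    pow_le_pow_left₀ h1C (by linarith [Real.add_one_le_exp (-(1 / (C:ℝ)))]) C
  have hp3 : Real.exp (-(1 / (C:ℝ))) ^ C = Real.exp (-1) := by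
    rw [← Real.exp_nat_mul]
    congr 1
    field_simp
  have hp4 : Real.exp (-1 : ℝ) ≤ 1 / 2 := by
    rw [Real.exp_neg, one_div]
    have h2e : (2:ℝ) ≤ Real.exp 1 := by linarith [Real.add_one_le_exp 1]
    exact inv_anti₀ (by norm_num) h2e
  calc hitR N t ^ C ≤ (1 - 1 / C) ^ C := hp1
    _ ≤ Real.exp (-(1 / (C:ℝ))) ^ C := hp2
    _ = Real.exp (-1) := hp3
    _ ≤ 1 / 2 := hp4

lemma floor_big {N C : ℕ} (hN : 2 ≤ N) (hlog : 6 ≤ Real.log C) :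
    Real.log C / 6 ≤ (⌊(N : ℝ) * Real.log C / 2⌋₊ : ℝ) * (1 / 2) := by
  have hn : (2:ℝ) ≤ (N : ℝ) := by exact_mod_cast hN
  set L := Real.log C with hL
  have h1 : (N : ℝ) * L / 2 - 1 < ⌊(N : ℝ) * L / 2⌋₊ := Nat.sub_one_lt_floor _
  have h2 : L ≤ (N : ℝ) * L / 2 := by nlinarith
  nlinarith

/-! ### Measure-theoretic layer -/

section Measure

variable {N C : ℕ} {μ : Measure (ℕ → Fin C → Fin N)}

lemma cylinder_meas (t : ℕ) (g : Fin t → Fin C → Fin N) :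
    MeasurableSet {ω : ℕ → Fin C → Fin N | ∀ s : Fin t, ω (s : ℕ) = g s} := by
  have : {ω : ℕ → Fin C → Fin N | ∀ s : Fin t, ω (s : ℕ) = g s}
      = ⋂ s : Fin t, (fun ω : ℕ → Fin C → Fin N => ω (s : ℕ)) ⁻¹' {g s} := by
    ext ω; simp [Set.mem_iInter]
  rw [this]
  exact MeasurableSet.iInter fun s =>
    (measurable_pi_apply _) (Set.toFinite {g s}).measurableSet

lemma meas_cylinder (hμ : IsCouponMeasure μ) (t : ℕ) (g : Fin t → Fin C → Fin N) :
    μ {ω | ∀ s : Fin t, ω (s : ℕ) = g s} = (((N : ℝ≥0∞) ^ C)⁻¹) ^ t := by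
  classical
  set sets : ℕ → Set (ℕ → Fin C → Fin N) :=
    fun i => {ω | ∀ h : i < t, ω i = g ⟨i, h⟩} with hsets
  have hev : {ω : ℕ → Fin C → Fin N | ∀ s : Fin t, ω (s : ℕ) = g s}
      = ⋂ i ∈ Finset.range t, sets i := by
    ext ω
    simp only [Set.mem_setOf_eq, Set.mem_iInter, hsets, Finset.mem_range]
    constructor
    · intro h i hi hit; exact h ⟨i, hit⟩
    · intro h s; exact h s s.2 s.2
  have hind := hμ.2.1.meas_biInter (S := Finset.range t) (s := sets) ?_
  · rw [hev, hind]
    have : ∀ i ∈ Finset.range t, μ (sets i) = ((N : ℝ≥0∞) ^ C)⁻¹ := by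
      intro i hi
      have hit : i < t := Finset.mem_range.1 hi
      have : sets i = {ω : ℕ → Fin C → Fin N | ω i = g ⟨i, hit⟩} := by
        ext ω; simp only [hsets, Set.mem_setOf_eq]
        exact ⟨fun h => h hit, fun h _ => h⟩
      rw [this, hμ.2.2 i (g ⟨i, hit⟩)]
    rw [Finset.prod_congr rfl this, Finset.prod_const, Finset.card_range]
  · intro i _
    refine ⟨{f | ∀ h : i < t, f = g ⟨i, h⟩}, (Set.toFinite _).measurableSet, rfl⟩

lemma master (hμ : IsCouponMeasure μ) (t : ℕ) (Qc : Fin C → (Fin t → Fin N) → Prop)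
    [∀ c, DecidablePred (Qc c)] :
    μ {ω | ∀ c, Qc c (fun s : Fin t => ω (s : ℕ) c)} =
      (∏ c, (#(univ.filter fun h : Fin t → Fin N => Qc c h) : ℝ≥0∞)) *
        (((N : ℝ≥0∞) ^ C)⁻¹) ^ t := by
  set V : Finset (Fin t → Fin C → Fin N) :=
    univ.filter (fun g => ∀ c, Qc c (fun s => g s c)) with hV
  have hev : {ω : ℕ → Fin C → Fin N | ∀ c, Qc c (fun s : Fin t => ω (s : ℕ) c)}
      = ⋃ g ∈ V, {ω | ∀ s : Fin t, ω (s : ℕ) = g s} := by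
    ext ω
    simp only [Set.mem_setOf_eq, Set.mem_iUnion, hV, Finset.mem_filter, Finset.mem_univ, true_and]
    constructor
    · intro h
      exact ⟨fun s => ω s, h, fun s => rfl⟩
    · rintro ⟨g, hg, hgω⟩ c
      have : (fun s : Fin t => ω (s : ℕ) c) = fun s => g s c := by
        funext s; rw [hgω s]
      rw [this]; exact hg c
  have hdisj : (V : Set (Fin t → Fin C → Fin N)).PairwiseDisjoint
      (fun g => {ω : ℕ → Fin C → Fin N | ∀ s : Fin t, ω (s : ℕ) = g s}) := by
    intro g _ g' _ hne
    refine Set.disjoint_left.2 fun ω hω hω' => hne ?_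
    funext s
    rw [← hω s, ← hω' s]
  rw [hev, measure_biUnion_finset hdisj fun g _ => cylinder_meas t g]
  rw [Finset.sum_congr rfl fun g _ => meas_cylinder hμ t g, Finset.sum_const, nsmul_eq_mul]
  congr 1
  have hcV : #V = Fintype.card {g : Fin t → Fin C → Fin N // ∀ c, Qc c (fun s => g s c)} := by
    rw [Fintype.card_subtype]
  rw [hcV]
  have e1 : {g : Fin t → Fin C → Fin N // ∀ c, Qc c (fun s => g s c)}
      ≃ {g' : Fin C → Fin t → Fin N // ∀ c, Qc c (g' c)} :=
    (Equiv.piComm fun _ _ => Fin N).subtypeEquiv fun g => Iff.rfl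
  have e2 : {g' : Fin C → Fin t → Fin N // ∀ c, Qc c (g' c)} ≃ ∀ c, {h : Fin t → Fin N // Qc c h} :=
    Equiv.subtypePiEquivPi
  rw [Fintype.card_congr (e1.trans e2), Fintype.card_pi]
  push_cast
  exact Finset.prod_congr rfl fun c _ => by rw [Fintype.card_subtype]

lemma event_meas (t : ℕ) (Qc : Fin C → (Fin t → Fin N) → Prop) :
    MeasurableSet {ω : ℕ → Fin C → Fin N | ∀ c, Qc c (fun s : Fin t => ω (s : ℕ) c)} := by
  have hr : Measurable (fun (ω : ℕ → Fin C → Fin N) (s : Fin t) => ω (s : ℕ)) :=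
    measurable_pi_lambda _ fun s => measurable_pi_apply _
  have : {ω : ℕ → Fin C → Fin N | ∀ c, Qc c (fun s : Fin t => ω (s : ℕ) c)}
      = (fun (ω : ℕ → Fin C → Fin N) (s : Fin t) => ω (s : ℕ)) ⁻¹'
        {g : Fin t → Fin C → Fin N | ∀ c, Qc c (fun s => g s c)} := rfl
  rw [this]
  exact hr (Set.toFinite _).measurableSet

lemma pow_inv_helper (a : ℝ≥0∞) (ha : a ≠ 0) (ha' : a ≠ ∞) {c : ℕ} (hc : 1 ≤ c) :
    a ^ (c - 1) * (a ^ c)⁻¹ = a⁻¹ := by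
  obtain ⟨k, rfl⟩ := Nat.exists_eq_add_of_le hc
  have h1 : 1 + k - 1 = k := by omega
  rw [h1, pow_add, pow_one, mul_comm a, ENNReal.mul_inv (Or.inl (pow_ne_zero k ha))
    (Or.inl (ENNReal.pow_ne_top ha'))]
  rw [← mul_assoc, ENNReal.mul_inv_cancel (pow_ne_zero k ha) (ENNReal.pow_ne_top ha'), one_mul]

lemma helper_oR2 (a n t : ℕ) (hn : 0 < n) :
    ENNReal.ofReal ((a : ℝ) / (n : ℝ) ^ t) = (a : ℝ≥0∞) / (n : ℝ≥0∞) ^ t := by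
  rw [ENNReal.ofReal_div_of_pos (by positivity), ENNReal.ofReal_natCast,
    ENNReal.ofReal_pow (by positivity), ENNReal.ofReal_natCast]

lemma pow_form (hN : 2 ≤ N) (a t : ℕ) :
    (a : ℝ≥0∞) ^ C * (((N : ℝ≥0∞) ^ C)⁻¹) ^ t
      = ENNReal.ofReal (((a : ℝ) / (N : ℝ) ^ t) ^ C) := by
  have hN0 : (0:ℕ) < N := by omega
  rw [ENNReal.ofReal_pow (by positivity), helper_oR2 a N t hN0, div_eq_mul_inv, mul_pow]
  congr 1
  rw [← ENNReal.inv_pow, ← ENNReal.inv_pow, ← pow_mul, ← pow_mul, Nat.mul_comm]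

noncomputable def sR (N : ℕ) (t : ℕ) : ℝ := (surjCount t N : ℝ) / (N : ℝ) ^ t

lemma qq_sR (t : ℕ) (hN : 1 ≤ N) : qq N t = 1 - sR N t := qq_eq N t hN

lemma sR_nonneg (t : ℕ) : 0 ≤ sR N t := by unfold sR; positivity

lemma sR_le_one (t : ℕ) (hN : 1 ≤ N) : sR N t ≤ 1 := by
  rw [sR, div_le_one (by positivity)]
  exact_mod_cast surjCount_le t N

variable (N C) in
def covAll (t : ℕ) : Set (ℕ → Fin C → Fin N) :=
  {ω | ∀ c : Fin C, (fun (_ : Fin C) (h : Fin t → Fin N) => ∀ x, ∃ s, h s = x) c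
    (fun s : Fin t => ω (s : ℕ) c)}

variable (N C) in
def cov0 (t : ℕ) (c0 : Fin C) : Set (ℕ → Fin C → Fin N) :=
  {ω | ∀ c, (fun (c : Fin C) (h : Fin t → Fin N) => c = c0 → ∀ x, ∃ s, h s = x) c
    (fun s : Fin t => ω (s : ℕ) c)}

variable (N C) in
def covC (t : ℕ) (x0 : Fin N) : Set (ℕ → Fin C → Fin N) :=
  {ω | ∀ c : Fin C, (fun (_ : Fin C) (h : Fin t → Fin N) => ∃ s, h s = x0) c
    (fun s : Fin t => ω (s : ℕ) c)}

lemma covAll_meas (t : ℕ) : MeasurableSet (covAll N C t) :=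
  event_meas t (fun (_ : Fin C) (h : Fin t → Fin N) => ∀ x, ∃ s, h s = x)
lemma cov0_meas (t : ℕ) (c0 : Fin C) : MeasurableSet (cov0 N C t c0) :=
  event_meas t (fun (c : Fin C) (h : Fin t → Fin N) => c = c0 → ∀ x, ∃ s, h s = x)
lemma covC_meas (t : ℕ) (x0 : Fin N) : MeasurableSet (covC N C t x0) :=
  event_meas t (fun (_ : Fin C) (h : Fin t → Fin N) => ∃ s, h s = x0)

lemma card_surj_filter (t : ℕ) :
    #(univ.filter fun h : Fin t → Fin N => ∀ x, ∃ s, h s = x) = surjCount t N := by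
  unfold surjCount
  apply congrArg
  exact Finset.filter_congr fun h _ => Iff.rfl

lemma meas_covAll (hμ : IsCouponMeasure μ) (hN : 2 ≤ N) (t : ℕ) :
    μ (covAll N C t) = ENNReal.ofReal ((sR N t) ^ C) := by
  classical
  rw [covAll, master hμ t (fun (_ : Fin C) (h : Fin t → Fin N) => ∀ x, ∃ s, h s = x)]
  rw [Finset.prod_const, card_surj_filter, card_univ, Fintype.card_fin, sR,
    pow_form hN _ t]

lemma meas_cov0 (hμ : IsCouponMeasure μ) (hN : 2 ≤ N) (hC : 1 ≤ C) (t : ℕ) (c0 : Fin C) :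
    μ (cov0 N C t c0) = ENNReal.ofReal (sR N t) := by
  classical
  rw [cov0, master hμ t (fun (c : Fin C) (h : Fin t → Fin N) => c = c0 → ∀ x, ∃ s, h s = x)]
  have hprod : (∏ c : Fin C, (#(univ.filter fun h : Fin t → Fin N =>
        c = c0 → ∀ x, ∃ s, h s = x) : ℝ≥0∞))
      = (surjCount t N : ℝ≥0∞) * ((N : ℝ≥0∞) ^ t) ^ (C - 1) := by
    rw [← Finset.mul_prod_erase univ _ (mem_univ c0)]
    congr 1
    · have : (univ.filter fun h : Fin t → Fin N => c0 = c0 → ∀ x, ∃ s, h s = x)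
          = (univ.filter fun h : Fin t → Fin N => ∀ x, ∃ s, h s = x) :=
        Finset.filter_congr fun h _ => by simp
      rw [this, card_surj_filter]
    · have : ∀ c ∈ univ.erase c0, (#(univ.filter fun h : Fin t → Fin N =>
          c = c0 → ∀ x, ∃ s, h s = x) : ℝ≥0∞) = ((N : ℝ≥0∞) ^ t) := by
        intro c hc
        have hne : c ≠ c0 := (Finset.mem_erase.1 hc).1
        have : (univ.filter fun h : Fin t → Fin N => c = c0 → ∀ x, ∃ s, h s = x) = univ :=
          Finset.filter_true_of_mem fun h _ hcc => absurd hcc hne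
        rw [this, card_univ, Fintype.card_pi]
        simp
      rw [Finset.prod_congr rfl this, Finset.prod_const, Finset.card_erase_of_mem (mem_univ c0),
        card_univ, Fintype.card_fin]
  rw [hprod]
  have ha0 : ((N : ℝ≥0∞) ^ t) ≠ 0 := by
    apply pow_ne_zero
    exact_mod_cast (by omega : N ≠ 0)
  have ha' : ((N : ℝ≥0∞) ^ t) ≠ ∞ := ENNReal.pow_ne_top (ENNReal.natCast_ne_top N)
  have hpow : (((N : ℝ≥0∞) ^ C)⁻¹) ^ t = (((N : ℝ≥0∞) ^ t) ^ C)⁻¹ := by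
    rw [ENNReal.inv_pow, ← pow_mul, Nat.mul_comm C t, pow_mul, ← ENNReal.inv_pow,
      ← ENNReal.inv_pow]
  rw [hpow, mul_assoc, pow_inv_helper _ ha0 ha' hC, sR,
    helper_oR2 _ _ _ (by omega), div_eq_mul_inv]

lemma meas_covC (hμ : IsCouponMeasure μ) (hN : 2 ≤ N) (t : ℕ) (x0 : Fin N) :
    μ (covC N C t x0) = ENNReal.ofReal ((hitR N t) ^ C) := by
  classical
  rw [covC, master hμ t (fun (_ : Fin C) (h : Fin t → Fin N) => ∃ s, h s = x0)]
  have hneg : #(univ.filter fun h : Fin t → Fin N => ¬ ∃ s, h s = x0) = (N - 1) ^ t := by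
    have : (univ.filter fun h : Fin t → Fin N => ¬ ∃ s, h s = x0)
        = (univ.filter fun h : Fin t → Fin N => ∀ s, h s ∈ ({x0}ᶜ : Finset (Fin N))) :=
      Finset.filter_congr fun h _ => by
        push_neg
        simp [Finset.mem_compl]
    rw [this, card_filter_mem, card_compl, card_singleton, Fintype.card_fin]
  have hcard : #(univ.filter fun h : Fin t → Fin N => ∃ s, h s = x0)
      = N ^ t - (N - 1) ^ t := by
    have hsum := Finset.card_filter_add_card_filter_not
      (s := (univ : Finset (Fin t → Fin N))) (p := fun h => ∃ s, h s = x0)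
    rw [hneg, card_univ] at hsum
    have h2 : Fintype.card (Fin t → Fin N) = N ^ t := by
      rw [Fintype.card_pi]; simp
    rw [h2] at hsum
    exact Nat.eq_sub_of_add_eq hsum
  rw [Finset.prod_const, card_univ, Fintype.card_fin]
  rw [hcard]
  rw [hitR]
  rw [pow_form hN _ t]

/-! ### coverTime and the tail-sum formula -/

lemma mem_covAll {ω : ℕ → Fin C → Fin N} {t : ℕ} :
    ω ∈ covAll N C t ↔ ∀ c : Fin C, ∀ x : Fin N, ∃ s < t, ω s c = x := by
  constructor
  · intro h c x
    obtain ⟨s, hs⟩ := h c x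
    exact ⟨s, s.2, hs⟩
  · intro h c x
    obtain ⟨s, hst, hs⟩ := h c x
    exact ⟨⟨s, hst⟩, hs⟩

lemma upward {ω : ℕ → Fin C → Fin N} {t v : ℕ} (htv : t ≤ v)
    (h : ∀ c : Fin C, ∀ x : Fin N, ∃ s < t, ω s c = x) :
    ∀ c : Fin C, ∀ x : Fin N, ∃ s < v, ω s c = x := by
  intro c x
  obtain ⟨s, hst, hs⟩ := h c x
  exact ⟨s, lt_of_lt_of_le hst htv, hs⟩

lemma lt_coverTime_iff {ω : ℕ → Fin C → Fin N} {t : ℕ} :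
    t < coverTime ω ↔ ω ∈ (covAll N C t)ᶜ ∩ ⋃ u, covAll N C u := by
  set S := {t' | ∀ c : Fin C, ∀ x : Fin N, ∃ s < t', ω s c = x} with hS
  constructor
  · intro h
    constructor
    · intro hmem
      have hle : coverTime ω ≤ t := Nat.sInf_le (mem_covAll.1 hmem : t ∈ S)
      omega
    · rcases Set.eq_empty_or_nonempty S with he | ⟨u, hu⟩
      · exfalso
        have : coverTime ω = 0 := by
          rw [coverTime, ← hS, he, Nat.sInf_empty]
        omega
      · exact Set.mem_iUnion.2 ⟨u, mem_covAll.2 hu⟩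
  · rintro ⟨hnot, hD⟩
    obtain ⟨u, hu⟩ := Set.mem_iUnion.1 hD
    have hne : S.Nonempty := ⟨u, mem_covAll.1 hu⟩
    have hmem := Nat.sInf_mem hne
    by_contra hle
    push_neg at hle
    exact hnot (mem_covAll.2 (upward hle hmem))

lemma lt_coverTime_set (t : ℕ) :
    {ω : ℕ → Fin C → Fin N | t < coverTime ω} = (covAll N C t)ᶜ ∩ ⋃ u, covAll N C u :=
  Set.ext fun ω => lt_coverTime_iff

lemma lt_coverTime_meas (t : ℕ) :
    MeasurableSet {ω : ℕ → Fin C → Fin N | t < coverTime ω} := by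
  rw [lt_coverTime_set]
  exact ((covAll_meas t).compl).inter (MeasurableSet.iUnion fun u => covAll_meas u)

lemma nat_tsum (n : ℕ) : ∑' t : ℕ, (if t < n then (1 : ℝ≥0∞) else 0) = n := by
  rw [tsum_eq_sum (s := Finset.range n) (fun t ht => if_neg (by simpa using ht))]
  rw [Finset.sum_congr rfl (fun t ht => if_pos (Finset.mem_range.1 ht)), Finset.sum_const,
    Finset.card_range, nsmul_eq_mul, mul_one]

lemma lintegral_coverTime :
    ∫⁻ ω, (coverTime ω : ℝ≥0∞) ∂μ = ∑' t, μ {ω | t < coverTime ω} := by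
  have hpt : ∀ ω : ℕ → Fin C → Fin N, (coverTime ω : ℝ≥0∞)
      = ∑' t, Set.indicator {ω' : ℕ → Fin C → Fin N | t < coverTime ω'}
          (fun _ => (1 : ℝ≥0∞)) ω := by
    intro ω
    rw [← nat_tsum (coverTime ω)]
    congr 1
    funext t
    rw [Set.indicator_apply]
    simp only [Set.mem_setOf_eq]
  rw [lintegral_congr hpt, lintegral_tsum fun t =>
    (measurable_const.indicator (lt_coverTime_meas t)).aemeasurable]
  congr 1
  funext t
  rw [lintegral_indicator_const (lt_coverTime_meas t), one_mul]

/-! ### Null set of non-covering outcomes, and the key tail bound -/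

lemma meas_covAll_compl (hμ : IsCouponMeasure μ) (hN : 2 ≤ N) (t : ℕ) :
    μ ((covAll N C t)ᶜ) = ENNReal.ofReal (1 - sR N t ^ C) := by
  haveI := hμ.1
  rw [measure_compl (covAll_meas t) (measure_ne_top μ _), measure_univ, meas_covAll hμ hN t]
  rw [ENNReal.ofReal_sub _ (pow_nonneg (sR_nonneg t) C), ENNReal.ofReal_one]

lemma meas_cov0_compl (hμ : IsCouponMeasure μ) (hN : 2 ≤ N) (hC : 1 ≤ C) (t : ℕ) (c0 : Fin C) :
    μ ((cov0 N C t c0)ᶜ) = ENNReal.ofReal (qq N t) := by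
  haveI := hμ.1
  rw [measure_compl (cov0_meas t c0) (measure_ne_top μ _), measure_univ,
    meas_cov0 hμ hN hC t c0, qq_sR t (by omega),
    ENNReal.ofReal_sub _ (sR_nonneg t), ENNReal.ofReal_one]

lemma meas_covC_compl (hμ : IsCouponMeasure μ) (hN : 2 ≤ N) (t : ℕ) (x0 : Fin N) :
    μ ((covC N C t x0)ᶜ) = ENNReal.ofReal (1 - hitR N t ^ C) := by
  haveI := hμ.1
  rw [measure_compl (covC_meas t x0) (measure_ne_top μ _), measure_univ, meas_covC hμ hN t x0]
  rw [ENNReal.ofReal_sub _ (pow_nonneg (hitR_nonneg N t) C), ENNReal.ofReal_one]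

lemma E_zero (hμ : IsCouponMeasure μ) (hN : 2 ≤ N) (hC : 1 ≤ C) :
    μ (⋂ t, (covAll N C t)ᶜ) = 0 := by
  refine le_antisymm ?_ zero_le
  have hbound : ∀ t : ℕ, μ (⋂ u, (covAll N C u)ᶜ) ≤ ENNReal.ofReal ((C : ℝ) * qq N t) := by
    intro t
    refine le_trans (measure_mono (Set.iInter_subset _ t)) ?_
    rw [meas_covAll_compl hμ hN t]
    apply ENNReal.ofReal_le_ofReal
    -- Bernoulli: 1 - sR^C ≤ C * (1 - sR)
    have hs0 := sR_nonneg (N := N) t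
    have hs1 := sR_le_one (N := N) t (by omega)
    have hb := one_add_mul_le_pow (a := sR N t - 1) (by linarith) C
    have hq := qq_sR (N := N) t (by omega : 1 ≤ N)
    have : 1 + (C : ℝ) * (sR N t - 1) ≤ sR N t ^ C := by
      calc 1 + (C : ℝ) * (sR N t - 1) ≤ (1 + (sR N t - 1)) ^ C := hb
        _ = sR N t ^ C := by ring_nf
    nlinarith
  have htend : Filter.Tendsto (fun t => ENNReal.ofReal ((C : ℝ) * qq N t))
      Filter.atTop (nhds 0) := by
    have hq0 : Filter.Tendsto (fun t => qq N t) Filter.atTop (nhds 0) :=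
      (qq_summable N (by omega)).tendsto_atTop_zero
    have h1 : Filter.Tendsto (fun t => (C : ℝ) * qq N t) Filter.atTop (nhds 0) := by
      simpa using hq0.const_mul (C : ℝ)
    have := ENNReal.tendsto_ofReal h1
    simpa using this
  exact ge_of_tendsto' htend hbound

lemma key_ge (hμ : IsCouponMeasure μ) (hN : 2 ≤ N) (hC : 1 ≤ C) (t : ℕ) :
    μ ((covAll N C t)ᶜ) ≤ μ {ω | t < coverTime ω} := by
  have hsub : (covAll N C t)ᶜ ⊆
      ((covAll N C t)ᶜ ∩ ⋃ u, covAll N C u) ∪ (⋂ u, (covAll N C u)ᶜ) := by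
    intro ω h
    by_cases hD : ω ∈ ⋃ u, covAll N C u
    · exact Or.inl ⟨h, hD⟩
    · refine Or.inr (Set.mem_iInter.2 fun u hu => hD (Set.mem_iUnion.2 ⟨u, hu⟩))
  calc μ ((covAll N C t)ᶜ)
      ≤ μ (((covAll N C t)ᶜ ∩ ⋃ u, covAll N C u) ∪ (⋂ u, (covAll N C u)ᶜ)) :=
        measure_mono hsub
    _ ≤ μ ((covAll N C t)ᶜ ∩ ⋃ u, covAll N C u) + μ (⋂ u, (covAll N C u)ᶜ) :=
        measure_union_le _ _
    _ = μ ((covAll N C t)ᶜ ∩ ⋃ u, covAll N C u) := by rw [E_zero hμ hN hC, add_zero]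
    _ = μ {ω | t < coverTime ω} := by rw [← lt_coverTime_set]

end Measure

end CouponCollectorAux

open CouponCollectorAux Finset

/-- In the parallel coupon collector problem with `N ≥ 2`
coupon types and `C ≥ 1` collectors, the cover time satisfies
`E[T(N, C)] ≥ max (N * H_N) (log C / 6)`. -/
theorem coupon_cover_time_lower_bound
    (N C : ℕ) (hN : 2 ≤ N) (hC : 1 ≤ C)
    (μ : Measure (ℕ → Fin C → Fin N)) (hμ : IsCouponMeasure μ) :
    ENNReal.ofReal (max ((N : ℝ) * harmonicR N) (Real.log C / 6)) ≤
      ∫⁻ ω, (coverTime ω : ℝ≥0∞) ∂μ := by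
  rw [lintegral_coverTime]
  -- Bound A : N * H_N
  have hA : ENNReal.ofReal ((N : ℝ) * harmonicR N) ≤ ∑' t, μ {ω | t < coverTime ω} := by
    set c0 : Fin C := ⟨0, by omega⟩
    have hstep : ∀ t : ℕ, ENNReal.ofReal (qq N t) ≤ μ {ω | t < coverTime ω} := by
      intro t
      rw [← meas_cov0_compl hμ hN hC t c0]
      refine le_trans (measure_mono (Set.compl_subset_compl.2 ?_)) (key_ge hμ hN hC t)
      intro ω hω c _
      exact hω c
    calc ENNReal.ofReal ((N : ℝ) * harmonicR N)
        = ENNReal.ofReal (∑' t, qq N t) := by rw [qq_tsum N (by omega)]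
      _ = ∑' t, ENNReal.ofReal (qq N t) :=
          ENNReal.ofReal_tsum_of_nonneg (fun t => qq_nonneg N t (by omega))
            (qq_summable N (by omega))
      _ ≤ ∑' t, μ {ω | t < coverTime ω} := ENNReal.tsum_le_tsum hstep
  -- Bound B : log C / 6
  have hB : ENNReal.ofReal (Real.log C / 6) ≤ ∑' t, μ {ω | t < coverTime ω} := by
    by_cases hcase : Real.log C / 6 ≤ (N : ℝ) * harmonicR N
    · exact le_trans (ENNReal.ofReal_le_ofReal hcase) hA
    · push_neg at hcase
      have hH : (3 : ℝ) ≤ (N : ℝ) * harmonicR N := by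
        have hmono : (3 / 2 : ℝ) ≤ harmonicR N := by
          have : harmonicR 2 ≤ harmonicR N := by
            apply Finset.sum_le_sum_of_subset_of_nonneg
            · exact Finset.range_subset_range.2 hN
            · intro i _ _; positivity
          have h2 : harmonicR 2 = 3 / 2 := by
            rw [harmonicR]
            norm_num [Finset.sum_range_succ]
          linarith
        have hn : (2 : ℝ) ≤ (N : ℝ) := by exact_mod_cast hN
        nlinarith
      have hlog : 6 ≤ Real.log C := by linarith
      set x0 : Fin N := ⟨0, by omega⟩
      set t0 := ⌊(N : ℝ) * Real.log C / 2⌋₊ with ht0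
      have hstep : ∀ t ∈ Finset.range t0,
          ENNReal.ofReal (1 / 2) ≤ μ {ω | t < coverTime ω} := by
        intro t ht
        have htle : t ≤ t0 := le_of_lt (Finset.mem_range.1 ht)
        have hsmall := hit_small hN hC hlog t htle
        have h1 : ENNReal.ofReal (1 / 2 : ℝ) ≤ ENNReal.ofReal (1 - hitR N t ^ C) :=
          ENNReal.ofReal_le_ofReal (by linarith)
        calc ENNReal.ofReal (1 / 2 : ℝ) ≤ ENNReal.ofReal (1 - hitR N t ^ C) := h1
          _ = μ ((covC N C t x0)ᶜ) := (meas_covC_compl hμ hN t x0).symm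
          _ ≤ μ ((covAll N C t)ᶜ) := by
              refine measure_mono (Set.compl_subset_compl.2 ?_)
              intro ω hω c
              exact hω c x0
          _ ≤ μ {ω | t < coverTime ω} := key_ge hμ hN hC t
      calc ENNReal.ofReal (Real.log C / 6)
          ≤ ENNReal.ofReal ((t0 : ℝ) * (1 / 2)) :=
            ENNReal.ofReal_le_ofReal (floor_big hN hlog)
        _ = (t0 : ℝ≥0∞) * ENNReal.ofReal (1 / 2) := by
            rw [ENNReal.ofReal_mul (by positivity), ENNReal.ofReal_natCast]
        _ = ∑ t ∈ Finset.range t0, ENNReal.ofReal (1 / 2) := by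
            rw [Finset.sum_const, Finset.card_range, nsmul_eq_mul]
        _ ≤ ∑ t ∈ Finset.range t0, μ {ω | t < coverTime ω} := Finset.sum_le_sum hstep
        _ ≤ ∑' t, μ {ω | t < coverTime ω} := ENNReal.sum_le_tsum _
  rcases le_total ((N : ℝ) * harmonicR N) (Real.log C / 6) with h | h
  · rw [max_eq_right h]; exact hB
  · rw [max_eq_left h]; exact hA
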